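/- Let β : V × V → W be a flat symmetric bilinear form with respect to a Lorentzian inner product on the finite-dimensional space W, and assume S(β) is nondegenerate. Then dim N(β) ≥ dim V − dim S(β). -/

import Mathlib

open Module Finset

lemma aux_exists_max {α : Type*} [Nonempty α] (f : α → ℕ) (c : ℕ) (hc : ∀ x, f x ≤ c) :
    ∃ x₀, ∀ x, f x ≤ f x₀ := by
  have hne : (Set.range f).Nonempty := Set.range_nonempty f
  have hbdd : BddAbove (Set.range f) := ⟨c, by rintro _ ⟨x, rfl⟩; exact hc x⟩
  obtain ⟨x₀, hx₀⟩ := Nat.sSup_mem hne hbdd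
  exact ⟨x₀, fun x => hx₀ ▸ le_csSup hbdd ⟨x, rfl⟩⟩

lemma aux_B_coords {W : Type*} [AddCommGroup W] [Module ℝ W]
    {m : ℕ} (B : LinearMap.BilinForm ℝ W) (e : Basis (Fin m) ℝ W)
    (horth : ∀ i j, i ≠ j → B (e i) (e j) = 0) (u v : W) :
    B u v = ∑ i, e.repr u i * e.repr v i * B (e i) (e i) := by
  conv_lhs => rw [← e.sum_repr u, ← e.sum_repr v]
  rw [map_sum]
  refine Finset.sum_congr rfl fun j _ => ?_
  rw [map_smul, map_sum, LinearMap.sum_apply, Finset.smul_sum]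
  rw [Finset.sum_eq_single j]
  · simp only [map_smul, LinearMap.smul_apply, smul_eq_mul]; ring
  · intro i _ hij
    rw [map_smul, LinearMap.smul_apply, horth i j hij]; simp
  · simp

lemma aux_null_parallel {W : Type*} [AddCommGroup W] [Module ℝ W]
    {m : ℕ} (B : LinearMap.BilinForm ℝ W) (e : Basis (Fin m) ℝ W)
    (horth : ∀ i j, i ≠ j → B (e i) (e j) = 0)
    (hdiag : ∀ i, B (e i) (e i) = if (i : ℕ) = 0 then -1 else 1)
    {u v : W} (hu : B u u = 0) (hv : B v v = 0) (huv : B u v = 0)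
    (hune : u ≠ 0) : ∃ t : ℝ, v = t • u := by
  rcases Nat.eq_zero_or_pos m with hm | hm
  · exfalso; apply hune
    rw [← e.sum_repr u]
    subst hm
    simp
  set i₀ : Fin m := ⟨0, hm⟩ with hi₀
  have hval : ∀ i : Fin m, i ≠ i₀ → ((i : ℕ) = 0 ↔ False) := by
    intro i hi
    simp only [iff_false]
    exact fun h => hi (Fin.ext h)
  set f : Fin m → ℝ := fun i => e.repr u i with hf
  set g : Fin m → ℝ := fun i => e.repr v i with hg
  set a := f i₀ with ha
  set b := g i₀ with hb
  set E := Finset.univ.erase i₀ with hE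
  have hsplit : ∀ x y : W, B x y = -(e.repr x i₀ * e.repr y i₀)
      + ∑ i ∈ E, e.repr x i * e.repr y i := by
    intro x y
    rw [aux_B_coords B e horth x y, ← Finset.add_sum_erase _ _ (Finset.mem_univ i₀)]
    congr 1
    · rw [hdiag]; simp [hi₀]
    · refine Finset.sum_congr rfl fun i hi => ?_
      rw [hdiag, if_neg]
      · ring
      · exact fun h => (Finset.mem_erase.1 hi).1 (Fin.ext h)
  have hSu : ∑ i ∈ E, f i * f i = a * a := by
    have := hsplit u u; rw [hu] at this; linarith
  have hSv : ∑ i ∈ E, g i * g i = b * b := by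
    have := hsplit v v; rw [hv] at this; linarith
  have hSuv : ∑ i ∈ E, f i * g i = a * b := by
    have := hsplit u v; rw [huv] at this; linarith
  have hkey : ∑ i ∈ E, (a * g i - b * f i) ^ 2 = 0 := by
    have expand : ∑ i ∈ E, (a * g i - b * f i) ^ 2 =
        a ^ 2 * (∑ i ∈ E, g i * g i) - 2 * a * b * (∑ i ∈ E, f i * g i)
          + b ^ 2 * (∑ i ∈ E, f i * f i) := by
      rw [Finset.mul_sum, Finset.mul_sum, Finset.mul_sum, ← Finset.sum_sub_distrib,
        ← Finset.sum_add_distrib]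
      exact Finset.sum_congr rfl fun i _ => by ring
    rw [expand, hSu, hSv, hSuv]; ring
  have hterm : ∀ i ∈ E, a * g i - b * f i = 0 := by
    intro i hi
    have h2 := (Finset.sum_eq_zero_iff_of_nonneg (fun i _ => sq_nonneg (a * g i - b * f i))).1
      hkey i hi
    exact pow_eq_zero_iff (n := 2) (by norm_num) |>.1 h2
  have hane : a ≠ 0 := by
    intro ha0
    apply hune
    have hz : ∀ i ∈ E, f i * f i = 0 := by
      intro i hi
      refine (Finset.sum_eq_zero_iff_of_nonneg (fun i _ => mul_self_nonneg (f i))).1 ?_ i hi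
      rw [hSu, ha0]; ring
    have hall : ∀ i, f i = 0 := by
      intro i
      by_cases hi : i = i₀
      · rw [hi, ← ha, ha0]
      · exact mul_self_eq_zero.1 (hz i (Finset.mem_erase.2 ⟨hi, Finset.mem_univ i⟩))
    rw [← e.sum_repr u]
    refine Finset.sum_eq_zero fun i _ => ?_
    rw [show e.repr u i = f i from rfl, hall i, zero_smul]
  refine ⟨b / a, ?_⟩
  have hco : ∀ i, g i = (b / a) * f i := by
    intro i
    by_cases hi : i = i₀
    · rw [hi, ← ha, ← hb]; field_simp
    · have := hterm i (Finset.mem_erase.2 ⟨hi, Finset.mem_univ i⟩)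
      field_simp
      linarith
  rw [← e.sum_repr v, ← e.sum_repr u, Finset.smul_sum]
  refine Finset.sum_congr rfl fun i _ => ?_
  rw [show e.repr v i = g i from rfl, show e.repr u i = f i from rfl, hco i, smul_smul]

lemma aux_regular {V W : Type*} [AddCommGroup V] [Module ℝ V]
    [AddCommGroup W] [Module ℝ W] [FiniteDimensional ℝ W]
    (β : V →ₗ[ℝ] V →ₗ[ℝ] W) (X₀ : V)
    (hmax : ∀ X : V, Module.finrank ℝ (LinearMap.range (β X)) ≤
      Module.finrank ℝ (LinearMap.range (β X₀)))
    {Y : V} (hY : β X₀ Y = 0) (Z : V) :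
    β Z Y ∈ LinearMap.range (β X₀) := by
  by_contra hv
  set R := LinearMap.range (β X₀) with hR
  set r := Module.finrank ℝ R with hr
  let bR : Basis (Fin r) ℝ R := Module.finBasis ℝ R
  have hpre : ∀ i, ∃ y, β X₀ y = (bR i : W) := fun i => (bR i).2
  choose Y' hY' using hpre
  set u : Fin r → W := fun i => β X₀ (Y' i) with hu
  have hucoe : u = fun i => ((bR i : W)) := funext fun i => hY' i
  have li0 : LinearIndependent ℝ u := by
    rw [hucoe]
    exact bR.linearIndependent.map' R.subtype R.ker_subtype
  have hspan : Submodule.span ℝ (Set.range u) = R := by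
    rw [hucoe]
    have : (Set.range fun i => ((bR i : W))) = R.subtype '' Set.range bR := by
      rw [← Set.range_comp]; rfl
    rw [this, Submodule.span_image, bR.span_eq, Submodule.map_subtype_top]
  set v : W := β Z Y with hvdef
  set uv : Fin (r + 1) → W := Fin.snoc u v with huv
  have li_snoc : LinearIndependent ℝ uv :=
    linearIndependent_fin_snoc.mpr ⟨li0, by rw [hspan]; exact hv⟩
  -- construct coordinate functionals
  set P := Submodule.span ℝ (Set.range uv) with hP
  let bP : Basis (Fin (r + 1)) ℝ P := Basis.span li_snoc
  obtain ⟨Q, hQ⟩ := Submodule.exists_isCompl P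
  set proj := Submodule.projectionOnto P Q hQ with hproj
  set F : W →ₗ[ℝ] (Fin (r + 1) → ℝ) :=
    LinearMap.pi (fun j => Finsupp.lapply j ∘ₗ (bP.repr : P →ₗ[ℝ] (Fin (r + 1) →₀ ℝ)) ∘ₗ proj)
    with hF
  have hFuv : ∀ i j, F (uv i) j = if i = j then 1 else 0 := by
    intro i j
    have hmem : uv i ∈ P := Submodule.subset_span (Set.mem_range_self i)
    have h1 : proj (uv i) = ⟨uv i, hmem⟩ := by
      have := Submodule.projectionOnto_apply_left hQ (⟨uv i, hmem⟩ : P)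
      simpa using this
    have h2 : (⟨uv i, hmem⟩ : P) = bP i := by
      apply Subtype.ext
      exact congrArg Subtype.val (Module.Basis.span_apply li_snoc i).symm
    simp only [hF, LinearMap.pi_apply, LinearMap.comp_apply, h1, h2, Basis.repr_self,
      Finsupp.lapply_apply]
    simp [Finsupp.single_apply]
  -- the perturbation family
  set z : Fin (r + 1) → W := Fin.snoc (fun i => β Z (Y' i)) 0 with hz
  set M : ℝ → Matrix (Fin (r + 1)) (Fin (r + 1)) ℝ :=
    fun t => Matrix.of fun i j => F (uv i) j + t * F (z i) j with hM
  have hMw : ∀ t i j, M t i j = F (uv i + t • z i) j := by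
    intro t i j
    simp [hM, map_add, map_smul]
  have hM0 : M 0 = 1 := by
    ext i j
    rw [hM]
    simp only [Matrix.of_apply, zero_mul, add_zero]
    rw [hFuv i j, Matrix.one_apply]
  have hcont : Continuous fun t => (M t).det := by
    apply Continuous.matrix_det
    apply continuous_pi; intro i; apply continuous_pi; intro j
    exact continuous_const.add (continuous_id.mul continuous_const)
  have hdet0 : (M 0).det = 1 := by rw [hM0, Matrix.det_one]
  -- find t ≠ 0 with det ≠ 0
  have hev : ∀ᶠ t in nhds (0 : ℝ), (M t).det ≠ 0 :=
    hcont.continuousAt.eventually_ne (by rw [hdet0]; norm_num)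
  obtain ⟨ε, hε, hball⟩ := Metric.eventually_nhds_iff.1 hev
  set t : ℝ := ε / 2 with ht
  have htne : t ≠ 0 := by positivity
  have hdet : (M t).det ≠ 0 := by
    apply hball
    rw [Real.dist_eq, sub_zero, abs_of_pos (by positivity)]
    linarith
  -- the family at time t
  set wfam : Fin (r + 1) → W := fun i => uv i + t • z i with hwfam
  have liw : LinearIndependent ℝ wfam := by
    rw [Fintype.linearIndependent_iff]
    intro g hg
    have hFsum : ∀ j, ∑ i, g i * M t i j = 0 := by
      intro j
      have : F (∑ i, g i • wfam i) j = 0 := by rw [hg]; simp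
      rw [map_sum] at this
      simpa [hMw, hwfam, map_smul, Finset.sum_apply, smul_eq_mul, mul_add] using this
    have hvm : Matrix.vecMul g (M t) = 0 := by
      ext j
      simpa [Matrix.vecMul, dotProduct] using hFsum j
    have hunit : IsUnit (M t).det := isUnit_iff_ne_zero.2 hdet
    have : g = 0 := by
      have h2 := congrArg (fun w => Matrix.vecMul w (M t)⁻¹) hvm
      simpa [Matrix.vecMul_vecMul, Matrix.mul_nonsing_inv _ hunit] using h2
    intro i; rw [this]; rfl
  -- each vector lies in the range of β (X₀ + t • Z)
  have hmem : ∀ i, wfam i ∈ LinearMap.range (β (X₀ + t • Z)) := by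
    intro i
    induction i using Fin.lastCases with
    | last =>
      refine ⟨t⁻¹ • Y, ?_⟩
      have hadd : β (X₀ + t • Z) = β X₀ + t • β Z := by
        rw [map_add, map_smul]
      rw [hadd]
      simp only [LinearMap.add_apply, LinearMap.smul_apply, map_smul, hY, smul_zero, zero_add,
        smul_smul]
      rw [inv_mul_cancel₀ htne, one_smul]
      simp [hwfam, huv, hz, Fin.snoc_last, hvdef]
    | cast i =>
      refine ⟨Y' i, ?_⟩
      have hadd : β (X₀ + t • Z) = β X₀ + t • β Z := by
        rw [map_add, map_smul]
      rw [hadd]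
      simp [hwfam, huv, hz, Fin.snoc_castSucc, hu]
  -- contradiction with maximality
  have hle : Submodule.span ℝ (Set.range wfam) ≤ LinearMap.range (β (X₀ + t • Z)) := by
    rw [Submodule.span_le]
    rintro _ ⟨i, rfl⟩
    exact hmem i
  have h1 : Module.finrank ℝ (Submodule.span ℝ (Set.range wfam)) = r + 1 := by
    rw [finrank_span_eq_card liw, Fintype.card_fin]
  have h2 := Submodule.finrank_mono hle
  have h3 := hmax (X₀ + t • Z)
  rw [h1] at h2
  omega

/-- The flat bilinear form inequality in the Lorentzian case, assuming the
image subspace `S(β)` is nondegenerate. -/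
theorem stmt_4 {V W : Type*} [AddCommGroup V] [Module ℝ V] [FiniteDimensional ℝ V]
    [AddCommGroup W] [Module ℝ W] [FiniteDimensional ℝ W]
    (B : LinearMap.BilinForm ℝ W) (hBsymm : B.IsSymm)
    -- `B` is Lorentzian: there is an orthogonal basis with exactly one
    -- timelike vector (of square `-1`) and all other vectors of square `1`.
    (hLor : ∃ e : Basis (Fin (Module.finrank ℝ W)) ℝ W,
      (∀ i j, i ≠ j → B (e i) (e j) = 0) ∧
      (∀ i, B (e i) (e i) = if (i : ℕ) = 0 then -1 else 1))
    (β : V →ₗ[ℝ] V →ₗ[ℝ] W)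
    (hsymm : ∀ X Y : V, β X Y = β Y X)
    (hflat : ∀ X Y Z T : V, B (β X Y) (β Z T) = B (β X T) (β Z Y))
    (hnondeg : Submodule.span ℝ {w : W | ∃ X Y : V, β X Y = w} ⊓
        B.orthogonal (Submodule.span ℝ {w : W | ∃ X Y : V, β X Y = w}) = ⊥) :
    Module.finrank ℝ V - Module.finrank ℝ
        (Submodule.span ℝ {w : W | ∃ X Y : V, β X Y = w}) ≤
      Module.finrank ℝ (LinearMap.ker β) := by
  classical
  obtain ⟨e, horth, hdiag⟩ := hLor
  set S := Submodule.span ℝ {w : W | ∃ X Y : V, β X Y = w} with hS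
  set n := Module.finrank ℝ V with hn
  have hbound : ∀ X : V, Module.finrank ℝ (LinearMap.range (β X)) ≤ Module.finrank ℝ W :=
    fun X => (LinearMap.range (β X)).finrank_le
  obtain ⟨X₀, hmax⟩ := aux_exists_max (fun X => Module.finrank ℝ (LinearMap.range (β X))) _ hbound
  set R := LinearMap.range (β X₀) with hR
  set r := Module.finrank ℝ R with hrdef
  have hmemS : ∀ X Y : V, β X Y ∈ S := fun X Y => Submodule.subset_span ⟨X, Y, rfl⟩
  have hRS : R ≤ S := by rintro w ⟨y, rfl⟩; exact hmemS X₀ y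
  have hrs : r ≤ Module.finrank ℝ S := Submodule.finrank_mono hRS
  set s := Module.finrank ℝ S with hsdef
  set U := LinearMap.ker (β X₀) with hU
  have hrank : Module.finrank ℝ R + Module.finrank ℝ U = n :=
    LinearMap.finrank_range_add_finrank_ker (β X₀)
  set Ω := R ⊓ B.orthogonal R with hΩ
  have hZY : ∀ Y ∈ U, ∀ Z : V, β Z Y ∈ Ω := by
    intro Y hYk Z
    have hYk' : β X₀ Y = 0 := hYk
    refine Submodule.mem_inf.2 ⟨aux_regular β X₀ hmax hYk' Z, ?_⟩
    rw [LinearMap.BilinForm.mem_orthogonal_iff]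
    rintro w ⟨T, rfl⟩
    have hfl := hflat X₀ Y Z T
    rw [hYk'] at hfl
    simp only [map_zero, LinearMap.zero_apply] at hfl
    exact hfl.symm
  by_cases hcase : Ω = ⊥
  · have hUk : U ≤ LinearMap.ker β := by
      intro Y hYk
      rw [LinearMap.mem_ker]
      ext Z
      have hmem := hZY Y hYk Z
      rw [hcase, Submodule.mem_bot] at hmem
      rw [LinearMap.zero_apply, hsymm Y Z]
      exact hmem
    have hfin := Submodule.finrank_mono hUk
    omega
  · have hrne : r ≠ s := by
      intro hreq
      apply hcase
      have hReqS : R = S := Submodule.eq_of_le_of_finrank_eq hRS hreq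
      rw [hΩ, hReqS, hnondeg]
    obtain ⟨ξ, hξΩ, hξne⟩ := Submodule.exists_mem_ne_zero_of_ne_bot hcase
    have hiso : ∀ x ∈ Ω, ∀ y ∈ Ω, B x y = 0 := by
      intro x hx y hy
      exact (LinearMap.BilinForm.mem_orthogonal_iff.1 (Submodule.mem_inf.1 hy).2) x
        (Submodule.mem_inf.1 hx).1
    have hpar : ∀ y ∈ Ω, ∃ t : ℝ, y = t • ξ :=
      fun y hy => aux_null_parallel B e horth hdiag (hiso ξ hξΩ ξ hξΩ) (hiso y hy y hy)
        (hiso ξ hξΩ y hy) hξne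
    have hξS : ξ ∈ S := hRS (Submodule.mem_inf.1 hξΩ).1
    have hnotorth : ξ ∉ B.orthogonal S := by
      intro h
      apply hξne
      have : ξ ∈ S ⊓ B.orthogonal S := ⟨hξS, h⟩
      rwa [hnondeg, Submodule.mem_bot] at this
    have hexc : ∃ T₀ T₀' : V, B (β T₀ T₀') ξ ≠ 0 := by
      by_contra h
      push_neg at h
      apply hnotorth
      rw [LinearMap.BilinForm.mem_orthogonal_iff]
      intro y hyS
      have hle : S ≤ LinearMap.ker ((LinearMap.flip B) ξ) := by
        rw [hS, Submodule.span_le]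
        rintro w ⟨T, T', rfl⟩
        simpa using h T T'
      have := hle hyS
      rw [LinearMap.mem_ker] at this
      simpa using this
    obtain ⟨T₀, T₀', hc⟩ := hexc
    have hc' : B ξ (β T₀ T₀') ≠ 0 := by
      intro h0
      apply hc
      have := hBsymm.eq ξ (β T₀ T₀')
      rw [← this, h0]
    set L : U →ₗ[ℝ] W := (β T₀').comp U.subtype with hL
    have hrangeL : LinearMap.range L ≤ Ω := by
      rintro w ⟨y, rfl⟩
      exact hZY y y.2 T₀'
    have hΩspan : Ω ≤ Submodule.span ℝ {ξ} := by
      intro y hy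
      obtain ⟨t, ht⟩ := hpar y hy
      exact Submodule.mem_span_singleton.2 ⟨t, ht.symm⟩
    have hrankL : Module.finrank ℝ (LinearMap.range L) ≤ 1 := by
      calc Module.finrank ℝ (LinearMap.range L)
          ≤ Module.finrank ℝ (Submodule.span ℝ {ξ}) :=
            Submodule.finrank_mono (hrangeL.trans hΩspan)
        _ = 1 := finrank_span_singleton hξne
    have hkerL := LinearMap.finrank_range_add_finrank_ker L
    have hKk : ∀ y : LinearMap.ker L, ((y : U) : V) ∈ LinearMap.ker β := by
      intro y
      rw [LinearMap.mem_ker]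
      ext Z
      rw [LinearMap.zero_apply, hsymm]
      set Y₀ : V := ((y : U) : V) with hY₀
      have hyU : Y₀ ∈ U := (y : U).2
      obtain ⟨p, hp⟩ := hpar _ (hZY Y₀ hyU Z)
      have h2 : β T₀' Y₀ = 0 := y.2
      have h3 := hflat Y₀ Z T₀ T₀'
      rw [hsymm Y₀ T₀', h2] at h3
      simp only [map_zero, LinearMap.zero_apply] at h3
      rw [hsymm Y₀ Z, hp] at h3
      simp only [map_smul, LinearMap.smul_apply, smul_eq_mul] at h3
      have hp0 : p = 0 := by
        rcases mul_eq_zero.1 h3 with h | h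
        · exact h
        · exact absurd h hc'
      rw [hp, hp0, zero_smul]
    let ι : LinearMap.ker L →ₗ[ℝ] LinearMap.ker β :=
      LinearMap.codRestrict (LinearMap.ker β) ((U.subtype).comp (LinearMap.ker L).subtype) hKk
    have hinj : Function.Injective ι := by
      intro x y hxy
      have h1 : ((x : U) : V) = ((y : U) : V) := congrArg (Subtype.val : LinearMap.ker β → V) hxy
      exact Subtype.ext (Subtype.ext h1)
    have hfin : Module.finrank ℝ (LinearMap.ker L) ≤ Module.finrank ℝ (LinearMap.ker β) :=
      LinearMap.finrank_le_finrank_of_injective hinj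
    omega
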